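/- Let X be a real or complex Banach algebra with identity, let k be a fixed positive integer, and let g_n : X → X (n = 0,1,2,…) satisfy ‖g_n(ξ)‖ ≤ σ‖ξ‖ for all ξ ∈ X and all n, for some real σ > 0. Let a be an invertible element of X with ‖a‖ < 1 and let b_0, …, b_k ∈ X with b_k ≠ 0 satisfy b_0 a^k + b_1 a^{k−1} + b_2 a^{k−2} + ⋯ + b_k = 0 and Σ_{i=0}^{k−1} ‖b_0 a^i + b_1 a^{i−1} + ⋯ + b_i‖ < 1/σ. Then every solution (x_n)_{n ≥ −k} of the difference equation x_{n+1} = a x_n + g_n(b_0 x_n + b_1 x_{n−1} + ⋯ + b_k x_{n−k}) converges to zero. -/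

import Mathlib

open Filter Finset

private lemma aux_geom_bound (r e : ℝ) (hr0 : 0 ≤ r) (hr1 : r < 1) (he : 0 ≤ e)
    (u : ℕ → ℝ) (hu : ∀ n, u (n + 1) ≤ r * u n + e) :
    ∀ m, u m ≤ r ^ m * u 0 + e / (1 - r) := by
  have h1r : (0:ℝ) < 1 - r := by linarith
  intro m
  induction m with
  | zero =>
    have : 0 ≤ e / (1 - r) := div_nonneg he h1r.le
    simp only [pow_zero, one_mul]
    linarith
  | succ m ih =>
    have hkey : r * (e / (1 - r)) + e = e / (1 - r) := by
      field_simp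
      ring
    calc u (m + 1) ≤ r * u m + e := hu m
      _ ≤ r * (r ^ m * u 0 + e / (1 - r)) + e := by nlinarith
      _ = r ^ (m + 1) * u 0 + (r * (e / (1 - r)) + e) := by ring
      _ = r ^ (m + 1) * u 0 + e / (1 - r) := by rw [hkey]

private lemma aux_tendsto_zero {X : Type*} [NormedRing X] (a : X) (ha1 : ‖a‖ < 1)
    (u v : ℕ → X) (hrec : ∀ n, u (n + 1) = a * u n + v n)
    (hv : Tendsto (fun n => ‖v n‖) atTop (nhds 0)) :
    Tendsto u atTop (nhds 0) := by
  rw [tendsto_zero_iff_norm_tendsto_zero]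
  rw [Metric.tendsto_atTop] at hv ⊢
  intro ε hε
  set r := ‖a‖ with hr
  have hr0 : 0 ≤ r := norm_nonneg a
  have h1r : (0:ℝ) < 1 - r := by linarith
  set e := ε * (1 - r) / 3 with he
  have he0 : 0 < e := by positivity
  obtain ⟨N, hN⟩ := hv e he0
  have hvN : ∀ n, N ≤ n → ‖v n‖ ≤ e := by
    intro n hn
    have := hN n hn
    rw [Real.dist_eq, sub_zero, abs_of_nonneg (norm_nonneg _)] at this
    exact this.le
  set w : ℕ → ℝ := fun m => ‖u (N + m)‖ with hw
  have hwrec : ∀ m, w (m + 1) ≤ r * w m + e := by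
    intro m
    have h : u (N + m + 1) = a * u (N + m) + v (N + m) := hrec (N + m)
    calc w (m + 1) = ‖u (N + m + 1)‖ := by rw [hw]; ring_nf
      _ = ‖a * u (N + m) + v (N + m)‖ := by rw [h]
      _ ≤ ‖a * u (N + m)‖ + ‖v (N + m)‖ := norm_add_le _ _
      _ ≤ r * w m + e := by
          gcongr
          · exact norm_mul_le _ _
          · exact hvN _ (Nat.le_add_right _ _)
  have hbnd := aux_geom_bound r e hr0 ha1 he0.le w hwrec
  have hediv : e / (1 - r) = ε / 3 := by
    rw [he]
    field_simp
  have hpow : Tendsto (fun m : ℕ => r ^ m * w 0) atTop (nhds 0) := by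
    simpa using (tendsto_pow_atTop_nhds_zero_of_lt_one hr0 ha1).mul_const (w 0)
  obtain ⟨M, hM⟩ := (Metric.tendsto_atTop.1 hpow) (ε / 3) (by positivity)
  refine ⟨N + M, fun n hn => ?_⟩
  have hMn : r ^ (n - N) * w 0 < ε / 3 := by
    have := hM (n - N) (by omega)
    rw [Real.dist_eq, sub_zero] at this
    exact (le_abs_self _).trans_lt this
  have hun : ‖u n‖ = w (n - N) := by
    show ‖u n‖ = ‖u (N + (n - N))‖
    have h : N + (n - N) = n := by omega
    rw [h]
  rw [Real.dist_eq, sub_zero, abs_of_nonneg (norm_nonneg _), hun]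
  calc w (n - N) ≤ r ^ (n - N) * w 0 + e / (1 - r) := hbnd (n - N)
    _ < ε / 3 + ε / 3 := by rw [hediv]; linarith
    _ < ε := by linarith

/-- **Corollary 1 (gasc1).** In a real or complex Banach algebra `X` with identity,
with `‖gₙ(ξ)‖ ≤ σ‖ξ‖` (`σ > 0`), let `a` be invertible with `‖a‖ < 1` and let
`b₀, …, b_k` with `b_k ≠ 0` satisfy `b₀a^k + b₁a^{k−1} + ⋯ + b_k = 0` and
`∑_{i=0}^{k−1} ‖b₀aⁱ + b₁a^{i−1} + ⋯ + bᵢ‖ < 1/σ`. Then every solution of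
`x_{n+1} = a xₙ + gₙ(b₀xₙ + b₁x_{n−1} + ⋯ + b_k x_{n−k})` converges to zero. -/
theorem global_attractivity_single_linear_term
    {𝕜 X : Type*} [RCLike 𝕜] [NormedRing X] [NormOneClass X]
    [NormedAlgebra 𝕜 X] [CompleteSpace X]
    (k : ℕ) (hk : 0 < k)
    (g : ℕ → X → X) (σ : ℝ) (hσ : 0 < σ)
    (hg : ∀ (n : ℕ) (ξ : X), ‖g n ξ‖ ≤ σ * ‖ξ‖)
    (a : X) (ha : IsUnit a) (ha1 : ‖a‖ < 1)
    (b : ℕ → X) (hbk : b k ≠ 0)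
    (hroot : ∑ i ∈ Finset.range (k + 1), b i * a ^ (k - i) = 0)
    (hsum : ∑ i ∈ Finset.range k, ‖∑ j ∈ Finset.range (i + 1), b j * a ^ (i - j)‖ < 1 / σ)
    (x : ℤ → X)
    (hx : ∀ n : ℤ, 0 ≤ n → x (n + 1) =
      a * x n + g n.toNat (∑ i ∈ Finset.range (k + 1), b i * x (n - (i : ℤ)))) :
    Filter.Tendsto (fun n : ℕ => x (n : ℤ)) Filter.atTop (nhds 0) := by
  classical
  set c : ℕ → X := fun i => ∑ j ∈ Finset.range (i + 1), b j * a ^ (i - j) with hcdef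
  have hck : c k = 0 := hroot
  have hcstep : ∀ i, c (i + 1) = c i * a + b (i + 1) := by
    intro i
    show ∑ j ∈ Finset.range (i + 2), b j * a ^ (i + 1 - j) = _
    rw [Finset.sum_range_succ]
    congr 1
    · rw [hcdef]
      rw [Finset.sum_mul]
      apply Finset.sum_congr rfl
      intro j hj
      rw [Finset.mem_range] at hj
      rw [mul_assoc, ← pow_succ]
      congr 2
      omega
    · simp
  set y : ℤ → X := fun n => x n - a * x (n - 1) with hydef
  -- Key algebraic identity, by induction
  have key' : ∀ n : ℤ, ∀ m : ℕ, ∑ i ∈ Finset.range (m + 1), b i * x (n - (i : ℤ)) =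
      ∑ i ∈ Finset.range m, c i * y (n - (i : ℤ)) + c m * x (n - (m : ℤ)) := by
    intro n m
    induction m with
    | zero => simp [hcdef]
    | succ m ih =>
      have hyv : y (n - (m : ℤ)) = x (n - (m : ℤ)) - a * x (n - ((m + 1 : ℕ) : ℤ)) := by
        rw [hydef]
        congr 2
        push_cast
        ring
      rw [Finset.sum_range_succ (fun i : ℕ => b i * x (n - (i : ℤ))), ih,
        Finset.sum_range_succ (fun i : ℕ => c i * y (n - (i : ℤ))), hcstep m, hyv]
      noncomm_ring
  have key : ∀ n : ℤ, ∑ i ∈ Finset.range (k + 1), b i * x (n - (i : ℤ)) =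
      ∑ i ∈ Finset.range k, c i * y (n - (i : ℤ)) := by
    intro n
    rw [key' n k, hck]
    simp
  -- Recurrence for y
  have hyrec : ∀ n : ℤ, 0 ≤ n →
      y (n + 1) = g n.toNat (∑ i ∈ Finset.range k, c i * y (n - (i : ℤ))) := by
    intro n hn
    have h1 : y (n + 1) = x (n + 1) - a * x n := by
      rw [hydef]
      norm_num
    rw [h1, hx n hn, key n, add_sub_cancel_left]
  set S : ℝ := σ * ∑ i ∈ Finset.range k, ‖c i‖ with hSdef
  have hS0 : 0 ≤ S := by
    apply mul_nonneg hσ.le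
    exact Finset.sum_nonneg fun i _ => norm_nonneg _
  have hS1 : S < 1 := by
    have h1 : σ * (∑ i ∈ Finset.range k, ‖c i‖) < σ * (1 / σ) :=
      mul_lt_mul_of_pos_left hsum hσ
    have h2 : σ * (1 / σ) = 1 := by field_simp
    rw [hSdef]; rw [h2] at h1; exact h1
  -- Norm bound
  have hbound : ∀ n : ℤ, 0 ≤ n →
      ‖y (n + 1)‖ ≤ σ * ∑ i ∈ Finset.range k, ‖c i‖ * ‖y (n - (i : ℤ))‖ := by
    intro n hn
    rw [hyrec n hn]
    refine (hg _ _).trans ?_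
    apply mul_le_mul_of_nonneg_left _ hσ.le
    refine (norm_sum_le _ _).trans ?_
    exact Finset.sum_le_sum fun i _ => norm_mul_le _ _
  -- window step bound
  have hwin : ∀ n : ℤ, 0 ≤ n → ∀ D : ℝ, (∀ i ∈ Finset.range k, ‖y (n - (i : ℤ))‖ ≤ D) →
      ‖y (n + 1)‖ ≤ S * D := by
    intro n hn D hD
    refine (hbound n hn).trans ?_
    rw [hSdef, mul_assoc]
    apply mul_le_mul_of_nonneg_left _ hσ.le
    rw [Finset.sum_mul]
    exact Finset.sum_le_sum fun i hi =>
      mul_le_mul_of_nonneg_left (hD i hi) (norm_nonneg _)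
  set B : ℝ := ∑ i ∈ Finset.range k, ‖y (-(i : ℤ))‖ with hBdef
  have hB0 : 0 ≤ B := Finset.sum_nonneg fun i _ => norm_nonneg _
  have hbase : ∀ n : ℤ, 1 - (k : ℤ) ≤ n → n ≤ 0 → ‖y n‖ ≤ B := by
    intro n h1 h2
    obtain ⟨i, hik, rfl⟩ : ∃ i : ℕ, i < k ∧ n = -(i : ℤ) := ⟨(-n).toNat, by omega, by omega⟩
    exact Finset.single_le_sum (f := fun i : ℕ => ‖y (-(i : ℤ))‖)
      (fun j _ => norm_nonneg _) (Finset.mem_range.2 hik)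
  have hq0 : ∀ m : ℕ, ∀ n : ℤ, 1 - (k : ℤ) ≤ n → n ≤ (m : ℤ) → ‖y n‖ ≤ B := by
    intro m
    induction m with
    | zero => intro n h1 h2; exact hbase n h1 (by omega)
    | succ m ih =>
      intro n h1 h2
      rcases le_or_gt n (m : ℤ) with h | h
      · exact ih n h1 h
      · have hn : n = (m : ℤ) + 1 := by push_cast at h2; omega
        subst hn
        have hstep := hwin (m : ℤ) (by positivity) B (by
          intro i hi
          have hik := Finset.mem_range.1 hi
          exact ih _ (by omega) (by omega))
        refine hstep.trans ?_
        nlinarith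
  have hQ0 : ∀ n : ℤ, 1 - (k : ℤ) ≤ n → ‖y n‖ ≤ B := by
    intro n h1
    exact hq0 n.toNat n h1 (by omega)
  have hk1 : (1 : ℤ) ≤ (k : ℤ) := by exact_mod_cast hk
  have hQ : ∀ m : ℕ, ∀ n : ℤ, 1 - (k : ℤ) + (m : ℤ) * (k : ℤ) ≤ n → ‖y n‖ ≤ S ^ m * B := by
    intro m
    induction m with
    | zero =>
      intro n hn
      simpa using hQ0 n (by push_cast at hn; linarith)
    | succ m ih =>
      intro n hn
      have hmk : (0 : ℤ) ≤ (m : ℤ) * (k : ℤ) :=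
        mul_nonneg (Int.ofNat_nonneg m) (Int.ofNat_nonneg k)
      push_cast at hn
      have hn1 : (0 : ℤ) ≤ n - 1 := by nlinarith
      have hstep := hwin (n - 1) hn1 (S ^ m * B) (by
        intro i hi
        have hik := Finset.mem_range.1 hi
        apply ih
        have hik' : (i : ℤ) ≤ (k : ℤ) - 1 := by omega
        linarith)
      have heq : n - 1 + 1 = n := by ring
      rw [heq] at hstep
      calc ‖y n‖ ≤ S * (S ^ m * B) := hstep
        _ = S ^ (m + 1) * B := by ring
  -- y tends to zero along naturals
  have hytend : Tendsto (fun n : ℕ => ‖y ((n : ℤ) + 1)‖) atTop (nhds 0) := by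
    rw [Metric.tendsto_atTop]
    intro ε hε
    have hpow : Tendsto (fun m : ℕ => S ^ m * B) atTop (nhds 0) := by
      simpa using (tendsto_pow_atTop_nhds_zero_of_lt_one hS0 hS1).mul_const B
    obtain ⟨m, hm⟩ := ((hpow.eventually (gt_mem_nhds hε)).exists)
    refine ⟨m * k, fun n hn => ?_⟩
    rw [Real.dist_eq, sub_zero, abs_of_nonneg (norm_nonneg _)]
    refine lt_of_le_of_lt (hQ m ((n : ℤ) + 1) ?_) hm
    have h2 : ((m * k : ℕ) : ℤ) ≤ (n : ℤ) := by exact_mod_cast hn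
    push_cast at h2
    linarith
  -- conclude
  apply aux_tendsto_zero a ha1 (fun n : ℕ => x (n : ℤ)) (fun n : ℕ => y ((n : ℤ) + 1))
    _ hytend
  intro n
  show x (((n : ℕ) + 1 : ℕ) : ℤ) = a * x (n : ℤ) + y ((n : ℤ) + 1)
  have h1 : y ((n : ℤ) + 1) = x ((n : ℤ) + 1) - a * x (n : ℤ) := by
    rw [hydef]
    norm_num
  rw [h1]
  push_cast
  abel
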